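/- Let p be an odd prime, ℓ ≥ 1 an integer, and n, m integers. Suppose that there is no j with 0 ≤ j < ℓ such that p^j exactly divides both n and m (i.e., n = p^j n*, m = p^j m* with p ∤ n*m*), and suppose it is not the case that ℓ is even with p^ℓ | n and p^ℓ | m. Then C(n,m;p^ℓ) = 0. -/

import Mathlib

/-- For integers `n`, `m` and a (odd positive) modulus `d`,
`Csum n m d = Σ_{a ∈ (ℤ/dℤ)ˣ, a·n ≡ m (mod d)} (a/d)`, where `(a/d)` is the Jacobi symbol. -/
def Csum (n m : ℤ) (d : ℕ) : ℤ :=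
  ∑ a ∈ Finset.range d,
    if Nat.Coprime a d ∧ (a : ℤ) * n ≡ m [ZMOD (d : ℤ)] then jacobiSym (a : ℤ) d else 0

lemma sum_range_legendre (p : ℕ) [Fact p.Prime] (hp2 : p ≠ 2) :
    ∑ a ∈ Finset.range p, legendreSym p (a : ℤ) = 0 := by
  have h := quadraticChar_sum_zero (F := ZMod p) (by rwa [ZMod.ringChar_zmod_n])
  rw [← h]
  refine Finset.sum_nbij' (i := fun a => ((a : ℕ) : ZMod p)) (j := fun x => x.val)
    (fun a _ => Finset.mem_univ _) (fun x _ => Finset.mem_range.2 (ZMod.val_lt x))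
    ?_ ?_ ?_
  · intro a ha
    exact ZMod.val_natCast_of_lt (Finset.mem_range.1 ha)
  · intro x _
    exact ZMod.natCast_rightInverse x
  · intro a _
    rw [legendreSym]
    norm_cast

lemma sum_range_mul_legendre (p : ℕ) [Fact p.Prime] (hp2 : p ≠ 2) (k : ℕ) :
    ∑ a ∈ Finset.range (k * p), legendreSym p (a : ℤ) = 0 := by
  induction k with
  | zero => simp
  | succ k ih =>
      rw [add_mul, one_mul, Finset.sum_range_add, ih, zero_add]
      rw [← sum_range_legendre p hp2]
      refine Finset.sum_congr rfl fun i _ => ?_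
      rw [legendreSym.mod, legendreSym.mod p (i : ℤ)]
      congr 1
      push_cast
      rw [add_comm ((k:ℤ)*(p:ℤ)) (i:ℤ), Int.add_mul_emod_self_right]

lemma sum_range_jacobi (p : ℕ) [Fact p.Prime] (hp2 : p ≠ 2) (ℓ : ℕ) (hℓ : Odd ℓ) :
    ∑ a ∈ Finset.range (p ^ ℓ), jacobiSym (a : ℤ) (p ^ ℓ) = 0 := by
  have hℓ0 : ℓ ≠ 0 := by rintro rfl; simp at hℓ
  have key : ∀ a : ℕ, jacobiSym (a : ℤ) (p ^ ℓ) = legendreSym p (a : ℤ) := by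
    intro a
    rw [jacobiSym.pow_right, ← jacobiSym.legendreSym.to_jacobiSym]
    rcases quadraticChar_isQuadratic (ZMod p) ((a : ℤ) : ZMod p) with h | h | h <;>
      rw [legendreSym, h]
    · exact zero_pow hℓ0
    · exact one_pow ℓ
    · exact hℓ.neg_one_pow
  simp_rw [key]
  have : p ^ ℓ = p ^ (ℓ - 1) * p := by
    conv_lhs => rw [show ℓ = (ℓ - 1) + 1 by omega]
    rw [pow_succ]
  rw [this]
  exact sum_range_mul_legendre p hp2 _


/-- `C(n,m;p^ℓ) = 0` outside of the two cases described in
Statements 1 and 2. -/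
theorem Csum_prime_pow_vanish (p : ℕ) (hp : p.Prime) (hpodd : Odd p)
    (ℓ : ℕ) (hℓ : 1 ≤ ℓ) (n m : ℤ)
    (h1 : ¬ ∃ j : ℕ, j < ℓ ∧ ∃ nstar mstar : ℤ,
        n = (p : ℤ) ^ j * nstar ∧ m = (p : ℤ) ^ j * mstar ∧ ¬ (p : ℤ) ∣ nstar * mstar)
    (h2 : ¬ (Even ℓ ∧ (p : ℤ) ^ ℓ ∣ n ∧ (p : ℤ) ^ ℓ ∣ m)) :
    Csum n m (p ^ ℓ) = 0 := by
  unfold Csum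
  haveI : Fact p.Prime := ⟨hp⟩
  have hp2 : p ≠ 2 := by rintro rfl; exact (Nat.not_odd_iff_even.2 (even_two)) hpodd
  have hcast : ((p ^ ℓ : ℕ) : ℤ) = (p : ℤ) ^ ℓ := by push_cast; ring
  by_cases hd : (p : ℤ) ^ ℓ ∣ n ∧ (p : ℤ) ^ ℓ ∣ m
  · -- everything divisible: congruence always true, ℓ odd
    have hodd : Odd ℓ := Nat.not_even_iff_odd.1 fun he => h2 ⟨he, hd⟩
    have hcong : ∀ a : ℕ, (a : ℤ) * n ≡ m [ZMOD ((p ^ ℓ : ℕ) : ℤ)] := by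
      intro a
      rw [Int.modEq_iff_dvd, hcast]
      exact dvd_sub hd.2 (Dvd.dvd.mul_left hd.1 _)
    have step : ∀ a ∈ Finset.range (p ^ ℓ),
        (if Nat.Coprime a (p ^ ℓ) ∧ (a : ℤ) * n ≡ m [ZMOD ((p ^ ℓ : ℕ) : ℤ)]
          then jacobiSym (a : ℤ) (p ^ ℓ) else 0) = jacobiSym (a : ℤ) (p ^ ℓ) := by
      intro a _
      by_cases hc : Nat.Coprime a (p ^ ℓ)
      · rw [if_pos ⟨hc, hcong a⟩]
      · rw [if_neg (fun h => hc h.1)]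
        refine (jacobiSym.eq_zero_iff.2 ⟨pow_ne_zero ℓ hp.ne_zero, ?_⟩).symm
        rwa [Int.gcd_natCast_natCast]
    rw [Finset.sum_congr rfl step]
    exact sum_range_jacobi p hp2 ℓ hodd
  · -- no solutions
    refine Finset.sum_eq_zero fun a _ => ?_
    rw [if_neg]
    rintro ⟨hcop, hcong⟩
    rw [Int.modEq_iff_dvd, hcast] at hcong
    -- coprimality
    have hpa : IsCoprime ((p : ℤ)) (a : ℤ) := by
      rw [Int.isCoprime_iff_gcd_eq_one]
      have : Nat.Coprime a p := Nat.Coprime.coprime_dvd_right (dvd_pow_self p (by omega)) hcop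
      simpa [Int.gcd_natCast_natCast] using this.symm
    have key : ∀ k : ℕ, k ≤ ℓ → ((p : ℤ) ^ k ∣ n ↔ (p : ℤ) ^ k ∣ m) := by
      intro k hk
      have hdk : (p : ℤ) ^ k ∣ m - (a : ℤ) * n := (pow_dvd_pow _ hk).trans hcong
      constructor
      · intro h
        have : (p : ℤ) ^ k ∣ (a : ℤ) * n := Dvd.dvd.mul_left h _
        have := dvd_add hdk this
        simpa using this
      · intro h
        have h2 : (p : ℤ) ^ k ∣ (a : ℤ) * n := by
          have := dvd_sub h hdk
          simpa using this
        exact ((IsCoprime.pow_left hpa).dvd_of_dvd_mul_left h2)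
    have hnl : ¬ (p : ℤ) ^ ℓ ∣ n := fun h => hd ⟨h, (key ℓ le_rfl).1 h⟩
    have hml : ¬ (p : ℤ) ^ ℓ ∣ m := fun h => hd ⟨(key ℓ le_rfl).2 h, h⟩
    have hn0 : n ≠ 0 := fun h => hnl (h ▸ dvd_zero _)
    have hm0 : m ≠ 0 := fun h => hml (h ▸ dvd_zero _)
    set jn := padicValNat p n.natAbs with hjn
    set jm := padicValNat p m.natAbs with hjm
    have hna : n.natAbs ≠ 0 := Int.natAbs_ne_zero.2 hn0
    have hma : m.natAbs ≠ 0 := Int.natAbs_ne_zero.2 hm0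
    have hdn : (p : ℤ) ^ jn ∣ n := by
      rw [← Nat.cast_pow, Int.natCast_dvd]; exact pow_padicValNat_dvd
    have hdm : (p : ℤ) ^ jm ∣ m := by
      rw [← Nat.cast_pow, Int.natCast_dvd]; exact pow_padicValNat_dvd
    have hndn : ¬ (p : ℤ) ^ (jn + 1) ∣ n := by
      rw [← Nat.cast_pow, Int.natCast_dvd]; exact pow_succ_padicValNat_not_dvd hna
    have hndm : ¬ (p : ℤ) ^ (jm + 1) ∣ m := by
      rw [← Nat.cast_pow, Int.natCast_dvd]; exact pow_succ_padicValNat_not_dvd hma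
    have hjnl : jn < ℓ := by
      by_contra h
      exact hnl ((pow_dvd_pow _ (by omega)).trans hdn)
    have hjml : jm < ℓ := by
      by_contra h
      exact hml ((pow_dvd_pow _ (by omega)).trans hdm)
    have hje : jn = jm := by
      have h1' : jn ≤ jm := by
        by_contra h
        exact hndm ((pow_dvd_pow _ (by omega : jm + 1 ≤ jn)).trans
          ((key jn (by omega)).1 hdn))
      have h2' : jm ≤ jn := by
        by_contra h
        exact hndn ((pow_dvd_pow _ (by omega : jn + 1 ≤ jm)).trans
          ((key jm (by omega)).2 hdm))
      omega
    apply h1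
    obtain ⟨ns, hns⟩ := hdn
    obtain ⟨ms, hms⟩ := hdm
    refine ⟨jn, hjnl, ns, ms, hns, hje ▸ hms, ?_⟩
    intro hdvd
    rcases (Int.prime_iff_natAbs_prime.2 (by simpa using hp)).dvd_mul.1 hdvd with h | h
    · exact hndn (by rw [hns, pow_succ]; exact mul_dvd_mul_left _ h)
    · exact hndm (by rw [hms, pow_succ]; exact mul_dvd_mul_left _ h)
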